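/- Let N ≥ 1, let Ω ⊆ ℝ³ be open and T > 0, let Λ : (0,∞)^N → ℝ be continuously differentiable, positive, and positively homogeneous of degree one, let r : (0,∞)^N → ℝ^N be continuous, and let ρ : Ω × (0,T) → (0,∞)^N and v : Ω × (0,T) → ℝ³ be differentiable. Suppose each component satisfies the mass balance with reaction ∂_t ρ_i + div(ρ_i v) = r_i(ρ) pointwise on Ω × (0,T). Then, with w := Λ(ρ), u := ρ/Λ(ρ), and f(w,u) := Σ_{j=1}^N r_j(w u) ∂Λ/∂ρ_j(u), the function w satisfies ∂_t w + div(w v) = f(w,u) pointwise on Ω × (0,T). -/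

import Mathlib

/-- Partial derivative in time of a function of `(x,t) ∈ ℝ³ × ℝ`. -/
noncomputable def ptime (f : ((Fin 3 → ℝ) × ℝ) → ℝ) (z : (Fin 3 → ℝ) × ℝ) : ℝ :=
  fderiv ℝ f z (0, 1)

/-- `k`-th spatial partial derivative of a function of `(x,t) ∈ ℝ³ × ℝ`. -/
noncomputable def pspace (k : Fin 3) (f : ((Fin 3 → ℝ) × ℝ) → ℝ) (z : (Fin 3 → ℝ) × ℝ) : ℝ :=
  fderiv ℝ f z (Pi.single k 1, 0)

/-- Spatial divergence of a vector field of `(x,t) ∈ ℝ³ × ℝ`. -/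
noncomputable def spaceDiv (F : ((Fin 3 → ℝ) × ℝ) → Fin 3 → ℝ) (z : (Fin 3 → ℝ) × ℝ) : ℝ :=
  ∑ k, pspace k (fun p => F p k) z

/-- Product rule for `pspace`. -/
lemma pspace_mul (k : Fin 3) (g h : ((Fin 3 → ℝ) × ℝ) → ℝ) (z : (Fin 3 → ℝ) × ℝ)
    (hg : DifferentiableAt ℝ g z) (hh : DifferentiableAt ℝ h z) :
    pspace k (fun p => g p * h p) z = pspace k g z * h z + g z * pspace k h z := by
  unfold pspace
  rw [fderiv_fun_mul hg hh]
  simp [mul_comm]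
  ring

/-- If each `ρ_i` satisfies the mass balance with reaction `∂_t ρ_i + div(ρ_i v) = r_i(ρ)`
on `Ω × (0,T)`, then `w = Λ(ρ)` satisfies `∂_t w + div(w v) = f(w,u)` with
`u = ρ/Λ(ρ)` and `f(w,u) = Σ_j r_j(w u) ∂Λ/∂ρ_j(u)`. -/
theorem volume_extension_with_reaction
    (N : ℕ) (hN : 1 ≤ N)
    (Ω : Set (Fin 3 → ℝ)) (hΩ : IsOpen Ω) (T : ℝ) (hT : 0 < T)
    (S : Set (Fin N → ℝ)) (hS : S = {y | ∀ i, 0 < y i})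
    (Λ : (Fin N → ℝ) → ℝ)
    (hΛ : ContDiffOn ℝ 1 Λ S)
    (hΛpos : ∀ y ∈ S, 0 < Λ y)
    (hhom : ∀ t : ℝ, 0 < t → ∀ y ∈ S, Λ (t • y) = t * Λ y)
    (r : (Fin N → ℝ) → Fin N → ℝ) (hr : ContinuousOn r S)
    (ρ : ((Fin 3 → ℝ) × ℝ) → Fin N → ℝ)
    (v : ((Fin 3 → ℝ) × ℝ) → Fin 3 → ℝ)
    (hρdiff : ∀ z : (Fin 3 → ℝ) × ℝ, z.1 ∈ Ω → z.2 ∈ Set.Ioo 0 T → DifferentiableAt ℝ ρ z)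
    (hvdiff : ∀ z : (Fin 3 → ℝ) × ℝ, z.1 ∈ Ω → z.2 ∈ Set.Ioo 0 T → DifferentiableAt ℝ v z)
    (hρS : ∀ z : (Fin 3 → ℝ) × ℝ, z.1 ∈ Ω → z.2 ∈ Set.Ioo 0 T → ρ z ∈ S)
    (hpde : ∀ (i : Fin N) (z : (Fin 3 → ℝ) × ℝ), z.1 ∈ Ω → z.2 ∈ Set.Ioo 0 T →
      ptime (fun p => ρ p i) z + spaceDiv (fun p k => ρ p i * v p k) z = r (ρ z) i)
    (w : ((Fin 3 → ℝ) × ℝ) → ℝ) (hw : ∀ z, w z = Λ (ρ z))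
    (u : ((Fin 3 → ℝ) × ℝ) → Fin N → ℝ) (hu : ∀ z, u z = (Λ (ρ z))⁻¹ • ρ z)
    (f : ℝ → (Fin N → ℝ) → ℝ)
    (hf : ∀ (a : ℝ) (b : Fin N → ℝ),
      f a b = ∑ j, r (a • b) j * fderiv ℝ Λ b (Pi.single j 1)) :
    ∀ z : (Fin 3 → ℝ) × ℝ, z.1 ∈ Ω → z.2 ∈ Set.Ioo 0 T →
      ptime w z + spaceDiv (fun p k => w p * v p k) z = f (w z) (u z) := by
  -- S is open
  have hSopen : IsOpen S := by
    rw [hS]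
    have : {y : Fin N → ℝ | ∀ i, 0 < y i} = ⋂ i, {y : Fin N → ℝ | 0 < y i} := by
      ext y; simp
    rw [this]
    exact isOpen_iInter_of_finite fun i =>
      isOpen_lt continuous_const (continuous_apply i)
  -- Λ differentiable on S
  have hΛderiv : ∀ x ∈ S, HasFDerivAt Λ (fderiv ℝ Λ x) x := fun x hx =>
    ((hΛ.contDiffAt (hSopen.mem_nhds hx)).differentiableAt one_ne_zero).hasFDerivAt
  -- Euler's relation
  have euler : ∀ x ∈ S, fderiv ℝ Λ x x = Λ x := by
    intro x hx
    have hsm : HasDerivAt (fun t : ℝ => t • x) x 1 := by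
      simpa using (hasDerivAt_id (1 : ℝ)).smul_const x
    have h1 : HasDerivAt (fun t : ℝ => Λ (t • x)) (fderiv ℝ Λ x x) 1 := by
      have hx1 : HasFDerivAt Λ (fderiv ℝ Λ x) ((1 : ℝ) • x) := by
        rw [one_smul]; exact hΛderiv x hx
      exact hx1.comp_hasDerivAt 1 hsm
    have h2 : (fun t : ℝ => Λ (t • x)) =ᶠ[nhds (1 : ℝ)] fun t => t * Λ x := by
      filter_upwards [Ioi_mem_nhds (by norm_num : (0 : ℝ) < 1)] with t ht
      exact hhom t ht x hx
    have h3 : HasDerivAt (fun t : ℝ => t * Λ x) (fderiv ℝ Λ x x) 1 :=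
      h1.congr_of_eventuallyEq h2.symm
    have h4 : HasDerivAt (fun t : ℝ => t * Λ x) (Λ x) 1 := by
      simpa using (hasDerivAt_id (1 : ℝ)).mul_const (Λ x)
    exact h3.unique h4
  -- gradient is homogeneous of degree 0
  have grad0 : ∀ x ∈ S, ∀ c : ℝ, 0 < c → ∀ d, fderiv ℝ Λ (c • x) d = fderiv ℝ Λ x d := by
    intro x hx c hc d
    have hcx : c • x ∈ S := by
      rw [hS] at hx ⊢
      intro i
      simpa using mul_pos hc (hx i)
    set M : (Fin N → ℝ) →L[ℝ] (Fin N → ℝ) := c • ContinuousLinearMap.id ℝ (Fin N → ℝ) with hM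
    have hMfd : HasFDerivAt (fun p : Fin N → ℝ => c • p) M x := by
      simpa [hM] using M.hasFDerivAt (x := x)
    have hcomp : HasFDerivAt (fun p : Fin N → ℝ => Λ (c • p))
        ((fderiv ℝ Λ (c • x)).comp M) x := (hΛderiv _ hcx).comp x hMfd
    have heq : (fun p : Fin N → ℝ => Λ (c • p)) =ᶠ[nhds x] fun p => c * Λ p := by
      filter_upwards [hSopen.mem_nhds hx] with p hp
      exact hhom c hc p hp
    have hcomp' : HasFDerivAt (fun p : Fin N → ℝ => c * Λ p)
        ((fderiv ℝ Λ (c • x)).comp M) x := hcomp.congr_of_eventuallyEq heq.symm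
    have hmul : HasFDerivAt (fun p : Fin N → ℝ => c * Λ p)
        (c • fderiv ℝ Λ x) x := (hΛderiv x hx).const_mul c
    have huniq := hcomp'.unique hmul
    have := congrArg (fun (L : (Fin N → ℝ) →L[ℝ] ℝ) => L d) huniq
    simp only [ContinuousLinearMap.comp_apply, ContinuousLinearMap.smul_apply, hM,
      ContinuousLinearMap.id_apply, smul_eq_mul, map_smul] at this
    exact mul_left_cancel₀ hc.ne' this
  intro z hz1 hz2
  have hρd := hρdiff z hz1 hz2
  have hvd := hvdiff z hz1 hz2
  have hyS := hρS z hz1 hz2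
  set L := fderiv ℝ Λ (ρ z) with hLdef
  set D := fderiv ℝ ρ z with hDdef
  have hΛρ : 0 < Λ (ρ z) := hΛpos _ hyS
  -- w = Λ ∘ ρ has derivative L.comp D
  have hwfun : w = fun p => Λ (ρ p) := funext hw
  have hwfd : HasFDerivAt w (L.comp D) z := by
    rw [hwfun]
    exact (hΛderiv (ρ z) hyS).comp z hρd.hasFDerivAt
  have hwdiff : DifferentiableAt ℝ w z := hwfd.differentiableAt
  -- component derivatives of ρ
  have hρj : ∀ j : Fin N, HasFDerivAt (fun p => ρ p j)
      ((ContinuousLinearMap.proj j).comp D) z := fun j =>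
    (ContinuousLinearMap.proj j : (Fin N → ℝ) →L[ℝ] ℝ).hasFDerivAt.comp z hρd.hasFDerivAt
  have hvk : ∀ k : Fin 3, DifferentiableAt ℝ (fun p => v p k) z :=
    fun k => (differentiableAt_pi.mp hvd) k
  set Dt : Fin N → ℝ := D (0, 1) with hDt
  set Dk : Fin 3 → Fin N → ℝ := fun k => D (Pi.single k 1, 0) with hDk
  set A : Fin 3 → ℝ := fun k => pspace k (fun p => v p k) z with hA
  set Lj : Fin N → ℝ := fun j => L (Pi.single j 1) with hLj
  set R : Fin N → ℝ := r (ρ z) with hR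
  -- linearity expansion of L
  have hLsum : ∀ d : Fin N → ℝ, L d = ∑ j, d j * Lj j := by
    intro d
    have hd : d = ∑ j, d j • (Pi.single j 1 : Fin N → ℝ) := by
      ext i
      simp [Pi.single_apply, Finset.sum_apply]
    calc L d = L (∑ j, d j • (Pi.single j 1 : Fin N → ℝ)) := by rw [← hd]
      _ = ∑ j, d j * Lj j := by
          rw [map_sum]
          exact Finset.sum_congr rfl fun j _ => by simp [hLj, smul_eq_mul]
  -- Euler at ρ z
  have euler' : Λ (ρ z) = ∑ j, ρ z j * Lj j := by
    rw [← hLsum (ρ z), hLdef]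
    exact (euler (ρ z) hyS).symm
  -- the PDE for each component, rewritten
  have key : ∀ j, Dt j + ∑ k, (Dk k j * v z k + ρ z j * A k) = R j := by
    intro j
    have h := hpde j z hz1 hz2
    have h1 : ptime (fun p => ρ p j) z = Dt j := by
      unfold ptime
      rw [(hρj j).fderiv]
      simp [hDt]
    have h2 : spaceDiv (fun p k => ρ p j * v p k) z
        = ∑ k, (Dk k j * v z k + ρ z j * A k) := by
      unfold spaceDiv
      refine Finset.sum_congr rfl fun k _ => ?_
      rw [pspace_mul k _ _ z ((hρj j).differentiableAt) (hvk k)]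
      have : pspace k (fun p => ρ p j) z = Dk k j := by
        unfold pspace
        rw [(hρj j).fderiv]
        simp [hDk]
      rw [this]
    rw [h1, h2] at h
    exact h
  -- compute LHS
  have hlhs1 : ptime w z = L Dt := by
    unfold ptime
    rw [hwfd.fderiv]
    simp [hDt]
  have hlhs2 : spaceDiv (fun p k => w p * v p k) z
      = ∑ k, (L (Dk k) * v z k + Λ (ρ z) * A k) := by
    unfold spaceDiv
    refine Finset.sum_congr rfl fun k _ => ?_
    rw [pspace_mul k _ _ z hwdiff (hvk k)]
    have hw1 : pspace k w z = L (Dk k) := by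
      unfold pspace
      rw [hwfd.fderiv]
      simp [hDk]
    rw [hw1, hw z]
  -- compute RHS
  have hwu : w z • u z = ρ z := by
    rw [hw z, hu z, smul_smul, mul_inv_cancel₀ hΛρ.ne', one_smul]
  have hgradu : ∀ j, fderiv ℝ Λ (u z) (Pi.single j 1) = Lj j := by
    intro j
    rw [hu z, hLj, hLdef]
    exact grad0 (ρ z) hyS _ (inv_pos.mpr hΛρ) _
  have hrhs : f (w z) (u z) = ∑ j, R j * Lj j := by
    rw [hf, hwu]
    exact Finset.sum_congr rfl fun j _ => by rw [hgradu j, hR]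
  -- final algebra
  rw [hlhs1, hlhs2, hrhs]
  calc L Dt + ∑ k, (L (Dk k) * v z k + Λ (ρ z) * A k)
      = (∑ j, Dt j * Lj j)
        + ∑ k, ((∑ j, Dk k j * Lj j) * v z k + (∑ j, ρ z j * Lj j) * A k) := by
        rw [hLsum Dt, euler']
        refine congrArg _ (Finset.sum_congr rfl fun k _ => ?_)
        rw [hLsum (Dk k)]
    _ = (∑ j, Dt j * Lj j)
        + ∑ k, ∑ j, (Dk k j * v z k * Lj j + ρ z j * A k * Lj j) := by
        refine congrArg _ (Finset.sum_congr rfl fun k _ => ?_)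
        rw [Finset.sum_mul, Finset.sum_mul, ← Finset.sum_add_distrib]
        exact Finset.sum_congr rfl fun j _ => by ring
    _ = (∑ j, Dt j * Lj j)
        + ∑ j, ∑ k, (Dk k j * v z k * Lj j + ρ z j * A k * Lj j) := by
        rw [Finset.sum_comm]
    _ = ∑ j, (Dt j + ∑ k, (Dk k j * v z k + ρ z j * A k)) * Lj j := by
        rw [← Finset.sum_add_distrib]
        exact Finset.sum_congr rfl fun j _ => by
          rw [add_mul, Finset.sum_mul]
          exact congrArg _ (Finset.sum_congr rfl fun k _ => by ring)
    _ = ∑ j, R j * Lj j := by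
        exact Finset.sum_congr rfl fun j _ => by rw [key j]
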